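/- Let ρ ∈ ℕ, δ₁, …, δ_ρ ∈ (−1, ∞), κ₁, …, κ_ρ ∈ ℤ₊, and α > −1. Then for every x ∈ ℂ and n ∈ ℤ₊, ℒ_n(x) = (n!/(2πi)) ∮_{|ζ|=1} ζ^{−n−1} e^ζ · ᵨF_{ρ+1}(δ₁+1, …, δ_ρ+1; α+1, κ₁+δ₁+1, …, κ_ρ+δ_ρ+1; −xζ) dζ, where the integral is taken over the positively oriented unit circle. -/

import Mathlib

/-- Pochhammer symbol `(c)_k = c (c+1) ⋯ (c+k-1)`. -/
noncomputable def poch (c : ℂ) (k : ℕ) : ℂ := ∏ j ∈ Finset.range k, (c + j)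

/-- The polynomials `ℒ_n(x;α,δ₁,…,δ_ρ,κ₁,…,κ_ρ)`. -/
noncomputable def calL (ρ : ℕ) (α : ℝ) (δ : Fin ρ → ℝ) (κ : Fin ρ → ℕ)
    (n : ℕ) (x : ℂ) : ℂ :=
  ∑' k : ℕ, poch (-(n : ℂ)) k * (∏ i, poch ((δ i : ℂ) + 1) k) /
      (poch ((α : ℂ) + 1) k * ∏ i, poch ((κ i : ℂ) + (δ i : ℂ) + 1) k) *
      x ^ k / (Nat.factorial k)

open Finset MeasureTheory intervalIntegral Real Complex Metric in
/-- interchange of circle integral and sum under a summable uniform bound -/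
lemma circleIntegral_tsum_comm (F : ℕ → ℂ → ℂ) (M : ℕ → ℝ)
    (hcont : ∀ k, Continuous fun θ : ℝ => F k (circleMap 0 1 θ))
    (hM : ∀ k θ, ‖F k (circleMap 0 1 θ)‖ ≤ M k)
    (hsum : Summable M) :
    (∮ ζ in C(0, 1), ∑' k, F k ζ) = ∑' k, ∮ ζ in C(0, 1), F k ζ := by
  have h2π : (0:ℝ) ≤ 2 * π := Real.two_pi_pos.le
  have hM0 : ∀ k, 0 ≤ M k := fun k => le_trans (norm_nonneg _) (hM k 0)
  have hnorm : ∀ (k : ℕ) (θ : ℝ),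
      ‖circleMap 0 1 θ * Complex.I * F k (circleMap 0 1 θ)‖ = ‖F k (circleMap 0 1 θ)‖ := by
    intro k θ
    rw [norm_mul, norm_mul]
    simp [norm_circleMap_zero]
  have hInt : ∀ k, Integrable
      (fun θ : ℝ => circleMap 0 1 θ * Complex.I * F k (circleMap 0 1 θ))
      (volume.restrict (Set.Ioc (0:ℝ) (2*π))) := by
    intro k
    exact (((continuous_circleMap 0 1).mul continuous_const).mul (hcont k)).integrableOn_Ioc
  have hSum : Summable fun k =>
      ∫ θ in Set.Ioc (0:ℝ) (2*π),
        ‖circleMap 0 1 θ * Complex.I * F k (circleMap 0 1 θ)‖ := by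
    refine Summable.of_nonneg_of_le
      (fun k => MeasureTheory.integral_nonneg fun θ => norm_nonneg _)
      (fun k => ?_) (hsum.mul_right (2*π))
    have hb : ‖∫ θ in Set.Ioc (0:ℝ) (2*π),
        ‖circleMap 0 1 θ * Complex.I * F k (circleMap 0 1 θ)‖‖ ≤
        M k * (volume (Set.Ioc (0:ℝ) (2*π))).toReal := by
      refine norm_setIntegral_le_of_norm_le_const ?_ (fun θ _ => ?_)
      · rw [Real.volume_Ioc]; exact ENNReal.ofReal_lt_top
      · rw [Real.norm_of_nonneg (norm_nonneg _), hnorm]; exact hM k θ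
    calc ∫ θ in Set.Ioc (0:ℝ) (2*π), ‖circleMap 0 1 θ * Complex.I * F k (circleMap 0 1 θ)‖
        ≤ ‖∫ θ in Set.Ioc (0:ℝ) (2*π), ‖circleMap 0 1 θ * Complex.I * F k (circleMap 0 1 θ)‖‖ :=
          le_abs_self _
      _ ≤ M k * (volume (Set.Ioc (0:ℝ) (2*π))).toReal := hb
      _ = M k * (2*π) := by rw [Real.volume_Ioc, sub_zero, ENNReal.toReal_ofReal h2π]
  have key := MeasureTheory.integral_tsum_of_summable_integral_norm hInt hSum
  simp only [circleIntegral, deriv_circleMap, smul_eq_mul]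
  rw [intervalIntegral.integral_of_le h2π]
  have h1 : ∀ k : ℕ, (∫ θ in (0:ℝ)..(2*π), circleMap 0 1 θ * Complex.I * F k (circleMap 0 1 θ))
      = ∫ θ in Set.Ioc (0:ℝ) (2*π), circleMap 0 1 θ * Complex.I * F k (circleMap 0 1 θ) :=
    fun k => intervalIntegral.integral_of_le h2π
  simp only [h1]
  rw [key]
  refine setIntegral_congr_fun measurableSet_Ioc fun θ _ => ?_
  exact (tsum_mul_left (a := circleMap 0 1 θ * Complex.I)).symm

open Finset Real Complex Metric in
lemma circleIntegral_zpow_exp (m : ℤ) :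
    (∮ ζ in C(0, 1), ζ ^ m * Complex.exp ζ) =
      if m < 0 then 2 * π * Complex.I / ((-1 - m).toNat).factorial else 0 := by
  have hz : ∀ θ : ℝ, circleMap 0 1 θ ≠ 0 := fun θ => circleMap_ne_center one_ne_zero
  have hzs : ∀ ζ : ℂ, ζ ∈ sphere (0:ℂ) 1 → ζ ≠ 0 := by
    intro ζ hζ h0
    rw [mem_sphere_iff_norm, h0] at hζ; simp at hζ
  have hexp : ∀ ζ : ℂ, Complex.exp ζ = ∑' j : ℕ, ζ ^ j / (j.factorial : ℂ) := by
    intro ζ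
    rw [Complex.exp_eq_exp_ℂ, NormedSpace.exp_eq_tsum_div]
  have h1 : (∮ ζ in C(0, 1), ζ ^ m * Complex.exp ζ)
      = ∮ ζ in C(0, 1), ∑' j : ℕ, ζ ^ m * (ζ ^ j / (j.factorial : ℂ)) := by
    refine circleIntegral.integral_congr zero_le_one fun ζ hζ => ?_
    rw [hexp ζ, tsum_mul_left]
  rw [h1]
  have h2 : (∮ ζ in C(0, 1), ∑' j : ℕ, ζ ^ m * (ζ ^ j / (j.factorial : ℂ)))
      = ∑' j : ℕ, ∮ ζ in C(0, 1), ζ ^ m * (ζ ^ j / (j.factorial : ℂ)) := by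
    refine circleIntegral_tsum_comm _ (fun j => 1 / (j.factorial : ℝ)) (fun j => ?_)
      (fun j θ => ?_) ?_
    · exact ((continuous_circleMap 0 1).zpow₀ m (fun θ => Or.inl (hz θ))).mul
        (((continuous_circleMap 0 1).pow j).div_const _)
    · have hc1 : ‖circleMap 0 1 θ‖ = 1 := by
        simp [norm_circleMap_zero]
      rw [norm_mul, norm_zpow, norm_div, norm_pow, hc1]
      simp
    · simpa using (Real.summable_pow_div_factorial 1).div_const 1 |>.congr
        (fun j => by simp)
  rw [h2]
  have h3 : ∀ j : ℕ, (∮ ζ in C(0, 1), ζ ^ m * (ζ ^ j / (j.factorial : ℂ)))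
      = if m + j = -1 then 2 * π * Complex.I / (j.factorial : ℂ) else 0 := by
    intro j
    have he : (∮ ζ in C(0, 1), ζ ^ m * (ζ ^ j / (j.factorial : ℂ)))
        = ∮ ζ in C(0, 1), ((j.factorial : ℂ))⁻¹ * ζ ^ (m + j) := by
      refine circleIntegral.integral_congr zero_le_one fun ζ hζ => ?_
      rw [zpow_add₀ (hzs ζ hζ), zpow_natCast]
      field_simp
    rw [he, circleIntegral.integral_const_mul]
    by_cases hmj : m + j = -1
    · have : (∮ ζ in C(0,1), ζ ^ (m + j)) = 2 * π * Complex.I := by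
        rw [hmj]
        have := circleIntegral.integral_sub_inv_of_mem_ball
          (c := (0:ℂ)) (w := (0:ℂ)) (R := 1) (by simp)
        rw [← this]
        refine circleIntegral.integral_congr zero_le_one fun ζ hζ => ?_
        simp [zpow_neg, zpow_one]
      rw [this, if_pos hmj]
      field_simp
    · have : (∮ ζ in C(0,1), ζ ^ (m + j)) = 0 := by
        have := circleIntegral.integral_sub_zpow_of_ne hmj (0:ℂ) (0:ℂ) 1
        simpa using this
      rw [this, if_neg hmj, mul_zero]
  rw [tsum_congr h3]
  by_cases hm : m < 0
  · have hj0 : m + ((-1 - m).toNat : ℤ) = -1 := by omega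
    rw [tsum_eq_single ((-1 - m).toNat) ?_]
    · rw [if_pos hj0, if_pos hm]
    · intro j hj
      rw [if_neg]
      intro hcon
      apply hj
      omega
  · rw [if_neg hm]
    convert tsum_zero with j
    rw [if_neg]
    omega

lemma poch_ofReal (r : ℝ) (k : ℕ) :
    poch (r : ℂ) k = ((∏ j ∈ Finset.range k, (r + j) : ℝ) : ℂ) := by
  rw [poch, Complex.ofReal_prod]
  exact Finset.prod_congr rfl fun j _ => by push_cast; ring

lemma pochR_pos {r : ℝ} (hr : 0 < r) (k : ℕ) :
    0 < ∏ j ∈ Finset.range k, (r + j) :=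
  Finset.prod_pos fun j _ => by positivity

lemma pochR_ge_min {r : ℝ} (hr : 0 < r) (k : ℕ) :
    min 1 r ≤ ∏ j ∈ Finset.range k, (r + j) := by
  induction k with
  | zero => simp
  | succ k ih =>
    rw [Finset.prod_range_succ]
    rcases Nat.eq_zero_or_pos k with hk | hk
    · subst hk; simpa using min_le_right 1 r
    · calc min 1 r ≤ (∏ j ∈ Finset.range k, (r + j)) * 1 := by rw [mul_one]; exact ih
        _ ≤ (∏ j ∈ Finset.range k, (r + j)) * (r + k) := by
            refine mul_le_mul_of_nonneg_left ?_ (pochR_pos hr k).le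
            have : (1:ℝ) ≤ (k:ℝ) := by exact_mod_cast hk
            linarith

lemma poch_neg_nat {n k : ℕ} (h : k ≤ n) :
    poch (-(n : ℂ)) k = (-1) ^ k * (n.descFactorial k : ℂ) := by
  rw [poch]
  have h1 : ∀ j ∈ Finset.range k, (-(n:ℂ) + j) = (-1) * ((n:ℂ) - j) := by
    intro j _; ring
  rw [Finset.prod_congr rfl h1, Finset.prod_mul_distrib, Finset.prod_const, Finset.card_range]
  congr 1
  rw [Nat.descFactorial_eq_prod_range, Nat.cast_prod]
  refine Finset.prod_congr rfl fun j hj => ?_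
  have hjn : j ≤ n := le_trans (Finset.mem_range.1 hj).le h
  rw [Nat.cast_sub hjn]

theorem stmt_5 (ρ : ℕ) (hρ : 0 < ρ) (δ : Fin ρ → ℝ) (hδ : ∀ i, -1 < δ i)
    (κ : Fin ρ → ℕ) (α : ℝ) (hα : -1 < α) (x : ℂ) (n : ℕ) :
    calL ρ α δ κ n x =
      (Nat.factorial n : ℂ) / (2 * Real.pi * Complex.I) *
        ∮ ζ in C(0, 1), ζ ^ (-(n : ℤ) - 1) * Complex.exp ζ *
          ∑' k : ℕ, (∏ i, poch ((δ i : ℂ) + 1) k) /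
            (poch ((α : ℂ) + 1) k * ∏ i, poch ((κ i : ℂ) + (δ i : ℂ) + 1) k) *
            (-(x * ζ)) ^ k / (Nat.factorial k) := by
  have hα1 : (0:ℝ) < α + 1 := by linarith
  have hminpos : 0 < min 1 (α + 1) := lt_min one_pos hα1
  set C : ℝ := (min 1 (α + 1))⁻¹ with hCdef
  set cc : ℕ → ℂ := fun k => (∏ i, poch ((δ i : ℂ) + 1) k) /
      (poch ((α : ℂ) + 1) k * ∏ i, poch ((κ i : ℂ) + (δ i : ℂ) + 1) k) with hcc
  -- real description of cc
  have e1 : ∀ (i : Fin ρ) (k : ℕ), poch ((δ i : ℂ) + 1) k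
      = ((∏ j ∈ Finset.range k, (δ i + 1 + j) : ℝ) : ℂ) := by
    intro i k
    have h : ((δ i + 1 : ℝ) : ℂ) = (δ i : ℂ) + 1 := by push_cast; ring
    rw [← h, poch_ofReal]
  have e2 : ∀ k : ℕ, poch ((α : ℂ) + 1) k
      = ((∏ j ∈ Finset.range k, (α + 1 + j) : ℝ) : ℂ) := by
    intro k
    have h : ((α + 1 : ℝ) : ℂ) = (α : ℂ) + 1 := by push_cast; ring
    rw [← h, poch_ofReal]
  have e3 : ∀ (i : Fin ρ) (k : ℕ), poch ((κ i : ℂ) + (δ i : ℂ) + 1) k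
      = ((∏ j ∈ Finset.range k, ((κ i : ℝ) + δ i + 1 + j) : ℝ) : ℂ) := by
    intro i k
    have h : (((κ i : ℝ) + δ i + 1 : ℝ) : ℂ) = (κ i : ℂ) + (δ i : ℂ) + 1 := by
      push_cast; ring
    rw [← h, poch_ofReal]
  have hccR : ∀ k : ℕ, cc k =
      (((∏ i, ∏ j ∈ Finset.range k, (δ i + 1 + j)) /
        ((∏ j ∈ Finset.range k, (α + 1 + j)) *
          ∏ i, ∏ j ∈ Finset.range k, ((κ i : ℝ) + δ i + 1 + j)) : ℝ) : ℂ) := by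
    intro k
    rw [hcc]
    simp only [e1, e2, e3]
    push_cast
    ring
  have hccbound : ∀ k : ℕ, ‖cc k‖ ≤ C := by
    intro k
    rw [hccR k, Complex.norm_real]
    set P := ∏ i, ∏ j ∈ Finset.range k, (δ i + 1 + j) with hP
    set Q := ∏ j ∈ Finset.range k, (α + 1 + j) with hQ
    set R := ∏ i, ∏ j ∈ Finset.range k, ((κ i : ℝ) + δ i + 1 + j) with hR
    have hQpos : 0 < Q := pochR_pos hα1 k
    have hRpos : 0 < R := Finset.prod_pos fun i _ => pochR_pos (by
      have h1 := hδ i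
      have h2 : (0:ℝ) ≤ (κ i : ℝ) := Nat.cast_nonneg _
      linarith) k
    have hPnonneg : 0 ≤ P := le_of_lt <| Finset.prod_pos fun i _ =>
      pochR_pos (by have := hδ i; linarith) k
    have hPR : P ≤ R := by
      refine Finset.prod_le_prod (fun i _ => le_of_lt <| pochR_pos (by have := hδ i; linarith) k)
        (fun i _ => ?_)
      refine Finset.prod_le_prod (fun j _ => by
        have h1 := hδ i
        have hj : (0:ℝ) ≤ (j:ℝ) := Nat.cast_nonneg _
        linarith) (fun j _ => ?_)
      have h2 : (0:ℝ) ≤ (κ i : ℝ) := Nat.cast_nonneg _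
      linarith
    rw [Real.norm_eq_abs, abs_of_nonneg (div_nonneg hPnonneg (by positivity))]
    have h1 : P / (Q * R) ≤ 1 / Q := by
      rw [div_le_div_iff₀ (mul_pos hQpos hRpos) hQpos]
      calc P * Q ≤ R * Q := mul_le_mul_of_nonneg_right hPR hQpos.le
        _ = 1 * (Q * R) := by ring
    refine h1.trans ?_
    rw [hCdef, one_div]
    exact inv_anti₀ hminpos (pochR_ge_min hα1 k)
  -- the summand functions
  set G : ℕ → ℂ → ℂ := fun k ζ =>
    ζ ^ (-(n : ℤ) - 1) * Complex.exp ζ * (cc k * (-(x * ζ)) ^ k / (Nat.factorial k : ℂ))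
    with hG
  have hzθ : ∀ θ : ℝ, circleMap 0 1 θ ≠ 0 := fun θ => circleMap_ne_center one_ne_zero
  have hnθ : ∀ θ : ℝ, ‖circleMap 0 1 θ‖ = 1 := by
    intro θ
    simp [norm_circleMap_zero]
  have step1 : (∮ ζ in C(0, 1), ζ ^ (-(n : ℤ) - 1) * Complex.exp ζ *
        ∑' k : ℕ, cc k * (-(x * ζ)) ^ k / (Nat.factorial k : ℂ))
      = ∑' k : ℕ, ∮ ζ in C(0, 1), G k ζ := by
    have heq : (∮ ζ in C(0, 1), ζ ^ (-(n : ℤ) - 1) * Complex.exp ζ *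
          ∑' k : ℕ, cc k * (-(x * ζ)) ^ k / (Nat.factorial k : ℂ))
        = ∮ ζ in C(0, 1), ∑' k : ℕ, G k ζ := by
      refine circleIntegral.integral_congr zero_le_one fun ζ hζ => ?_
      simp only [hG]
      rw [tsum_mul_left]
    rw [heq]
    refine circleIntegral_tsum_comm G
      (fun k => Real.exp 1 * C * (‖x‖ ^ k / (Nat.factorial k : ℝ))) ?_ ?_ ?_
    · intro k
      refine (((continuous_circleMap 0 1).zpow₀ _
        (fun θ => Or.inl (hzθ θ))).mul
        (Complex.continuous_exp.comp (continuous_circleMap 0 1))).mul ?_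
      exact (continuous_const.mul
        ((continuous_const.mul (continuous_circleMap 0 1)).neg.pow k)).div_const _
    · intro k θ
      have hζ1 : ‖circleMap 0 1 θ‖ = 1 := hnθ θ
      simp only [hG]
      have hexp : ‖Complex.exp (circleMap 0 1 θ)‖ ≤ Real.exp 1 := by
        rw [Complex.norm_exp]
        refine Real.exp_le_exp.2 ?_
        calc (circleMap 0 1 θ).re ≤ ‖circleMap 0 1 θ‖ := Complex.re_le_norm _
          _ = 1 := hζ1
      have hnorm2 : ‖circleMap 0 1 θ ^ (-(n:ℤ) - 1) * Complex.exp (circleMap 0 1 θ) *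
          (cc k * (-(x * circleMap 0 1 θ)) ^ k / (Nat.factorial k : ℂ))‖
          = ‖Complex.exp (circleMap 0 1 θ)‖ * (‖cc k‖ * ‖x‖ ^ k / (Nat.factorial k : ℝ)) := by
        rw [norm_mul, norm_mul, norm_div, norm_mul, norm_pow, norm_neg, norm_mul, norm_zpow,
          hζ1, one_zpow, one_mul]
        simp
      rw [hnorm2]
      calc ‖Complex.exp (circleMap 0 1 θ)‖ * (‖cc k‖ * ‖x‖ ^ k / (Nat.factorial k : ℝ))
          ≤ Real.exp 1 * (C * ‖x‖ ^ k / (Nat.factorial k : ℝ)) := by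
            gcongr
            exact hccbound k
        _ = Real.exp 1 * C * (‖x‖ ^ k / (Nat.factorial k : ℝ)) := by ring
    · exact (Real.summable_pow_div_factorial ‖x‖).mul_left _
  have step3 : ∀ k : ℕ, (∮ ζ in C(0, 1), G k ζ)
      = cc k * (-x) ^ k / (Nat.factorial k : ℂ) *
        (if ((k : ℤ) - n - 1) < 0 then
          2 * (Real.pi : ℂ) * Complex.I / (((-1 - ((k : ℤ) - n - 1)).toNat).factorial : ℂ)
        else 0) := by
    intro k
    have he : (∮ ζ in C(0, 1), G k ζ)
        = ∮ ζ in C(0, 1), (cc k * (-x) ^ k / (Nat.factorial k : ℂ)) *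
            (ζ ^ ((k : ℤ) - n - 1) * Complex.exp ζ) := by
      refine circleIntegral.integral_congr zero_le_one fun ζ hζ => ?_
      have hz : ζ ≠ 0 := by
        intro h0
        rw [Metric.mem_sphere, h0] at hζ
        simp at hζ
      simp only [hG]
      have h2 : ζ ^ ((k : ℤ) - n - 1) = ζ ^ (k : ℕ) * ζ ^ (-(n : ℤ) - 1) := by
        rw [← zpow_natCast ζ k, ← zpow_add₀ hz]
        congr 1
        ring
      have h3 : (-(x * ζ)) ^ k = (-x) ^ k * ζ ^ k := by
        rw [show -(x * ζ) = (-x) * ζ by ring, mul_pow]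
      rw [h2, h3]
      ring
    rw [he, circleIntegral.integral_const_mul, circleIntegral_zpow_exp]
  have main : calL ρ α δ κ n x
      = ∑' k : ℕ, (Nat.factorial n : ℂ) / (2 * Real.pi * Complex.I) *
          ∮ ζ in C(0, 1), G k ζ := by
    rw [calL]
    refine tsum_congr fun k => ?_
    rw [step3 k]
    have hrew : poch (-(n : ℂ)) k * (∏ i, poch ((δ i : ℂ) + 1) k) /
        (poch ((α : ℂ) + 1) k * ∏ i, poch ((κ i : ℂ) + (δ i : ℂ) + 1) k)
        = poch (-(n : ℂ)) k * cc k := mul_div_assoc _ _ _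
    rw [hrew]
    generalize cc k = q
    by_cases hk : k ≤ n
    · have hcond : ((k : ℤ) - n - 1) < 0 := by omega
      rw [if_pos hcond]
      have htn : (-1 - ((k : ℤ) - n - 1)).toNat = n - k := by omega
      rw [htn]
      have hfact : (Nat.factorial n : ℂ)
          = (n.descFactorial k : ℂ) * ((n - k).factorial : ℂ) := by
        rw [← Nat.cast_mul, mul_comm, Nat.factorial_mul_descFactorial hk]
      have h2πI : (2 * (Real.pi : ℂ) * Complex.I) ≠ 0 := by
        simp [Real.pi_ne_zero, Complex.I_ne_zero]
      have hkf : ((Nat.factorial k : ℂ)) ≠ 0 := Nat.cast_ne_zero.2 (Nat.factorial_ne_zero k)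
      have hnkf : (((n - k).factorial : ℂ)) ≠ 0 := Nat.cast_ne_zero.2 (Nat.factorial_ne_zero _)
      rw [poch_neg_nat hk, hfact, show ((-x) ^ k : ℂ) = (-1) ^ k * x ^ k by rw [neg_pow]]
      field_simp
    · push_neg at hk
      have hcond : ¬ (((k : ℤ) - n - 1) < 0) := by omega
      rw [if_neg hcond, mul_zero, mul_zero]
      have hpz : poch (-(n : ℂ)) k = 0 := by
        rw [poch]
        exact Finset.prod_eq_zero (Finset.mem_range.2 hk) (by simp)
      rw [hpz]
      simp
  calc calL ρ α δ κ n x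
      = ∑' k : ℕ, (Nat.factorial n : ℂ) / (2 * Real.pi * Complex.I) *
          ∮ ζ in C(0, 1), G k ζ := main
    _ = (Nat.factorial n : ℂ) / (2 * Real.pi * Complex.I) *
          ∑' k : ℕ, ∮ ζ in C(0, 1), G k ζ := tsum_mul_left
    _ = _ := by rw [← step1]
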